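/- Let {x,y} be a minimal separator in a planar graph G. Then any graph obtained from an induced subgraph of G (containing x and y) by adding either the edge {x,y} or an xy-path consisting of new interior vertices of degree two is planar. -/

import Mathlib

open SimpleGraph

variable {V : Type*}

/-- Reachability within the subgraph of `G` induced by the vertex set `W`. -/
def ReachIn (G : SimpleGraph V) (W : Set V) (x y : V) : Prop :=
  ∃ (hx : x ∈ W) (hy : y ∈ W), (G.induce W).Reachable ⟨x, hx⟩ ⟨y, hy⟩

/-- Removing `S` disconnects some connected component of `G`: there are two vertices
outside `S` that are connected in `G` but not in `G - S`. -/
def Separates (G : SimpleGraph V) (S : Set V) : Prop :=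
  ∃ u v : V, u ∉ S ∧ v ∉ S ∧ G.Reachable u v ∧ ¬ ReachIn G Sᶜ u v

/-- `S` is a minimal separator of `G`. -/
def IsMinimalSeparator (G : SimpleGraph V) (S : Set V) : Prop :=
  Separates G S ∧ ∀ S' ⊂ S, ¬ Separates G S'

/-- `C` is a connected component of the subgraph of `G` induced by `W`. -/
def IsCompOf (G : SimpleGraph V) (C W : Set V) : Prop :=
  C ⊆ W ∧ (G.induce C).Connected ∧ ∀ u ∈ C, ∀ v ∈ W, G.Adj u v → v ∈ C

/-- A separation `(A, B)` of a graph `G`. -/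
def IsSeparation (G : SimpleGraph V) (A B : Set V) : Prop :=
  A ∪ B = Set.univ ∧ ∀ u ∈ A \ B, ∀ v ∈ B \ A, ¬ G.Adj u v

/-- `(T, X)` is a tree decomposition of `G`. -/
structure IsTreeDecomp {ι : Type*} (G : SimpleGraph V) (T : SimpleGraph ι)
    (X : ι → Set V) : Prop where
  isTree : T.IsTree
  covers_verts : ∀ v : V, ∃ i, v ∈ X i
  covers_edges : ∀ ⦃u v : V⦄, G.Adj u v → ∃ i, u ∈ X i ∧ v ∈ X i
  subtree : ∀ v : V, (T.induce {i | v ∈ X i}).Connected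

/-- The tree decomposition given by the bag function `X` has adhesion at most `d`. -/
def AdhesionLE {ι : Type*} (T : SimpleGraph ι) (X : ι → Set V) (d : ℕ) : Prop :=
  ∀ ⦃i j : ι⦄, T.Adj i j → (X i ∩ X j).ncard ≤ d

/-- The torso of the vertex set `W` in `G`: the induced subgraph `G[W]` with an edge added
between each pair of vertices of `W` connected by a path internally avoiding `W`. -/
def torso (G : SimpleGraph V) (W : Set V) : SimpleGraph W :=
  SimpleGraph.fromRel (fun u v =>
    G.Adj u v ∨ ∃ p : G.Walk (u : V) (v : V), p.IsPath ∧
      ∀ z ∈ p.support, z ≠ (u : V) → z ≠ (v : V) → z ∉ W)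

/-- One smoothing step: `K` is obtained from `H` by replacing the degree-2 vertex `v`,
whose two neighbors are `a` and `b`, by a direct edge between `a` and `b`. -/
def SmoothStep (H K : SimpleGraph.Subgraph (⊤ : SimpleGraph V)) : Prop :=
  ∃ v a b : V, a ≠ b ∧ a ≠ v ∧ b ≠ v ∧ v ∈ H.verts ∧ H.neighborSet v = {a, b} ∧
    K.verts = H.verts \ {v} ∧
    ∀ x y : V, K.Adj x y ↔ ((H.Adj x y ∧ x ≠ v ∧ y ≠ v) ∨ (x = a ∧ y = b) ∨ (x = b ∧ y = a))

/-- `K` (a graph on a subset of the vertices of `G`) is a topological minor of `G`: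
it is obtained from a subgraph of `G` by repeatedly smoothing degree-2 vertices. -/
def IsTopMinor (K : SimpleGraph.Subgraph (⊤ : SimpleGraph V)) (G : SimpleGraph V) : Prop :=
  ∃ H₀ : SimpleGraph.Subgraph (⊤ : SimpleGraph V),
    (∀ ⦃x y : V⦄, H₀.Adj x y → G.Adj x y) ∧ Relation.ReflTransGen SmoothStep H₀ K

/-- An abstract graph `H` is a topological minor of `G` if it is isomorphic to some
topological minor of `G`. -/
def IsTopMinorGraph {W : Type*} (H : SimpleGraph W) (G : SimpleGraph V) : Prop :=
  ∃ K : SimpleGraph.Subgraph (⊤ : SimpleGraph V), IsTopMinor K G ∧ Nonempty (H ≃g K.coe)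

/-- One edge-contraction step: `K` is obtained from `H` by contracting the edge `{a, b}`
(the vertex `b` is merged into `a`). -/
def ContractStep (H K : SimpleGraph.Subgraph (⊤ : SimpleGraph V)) : Prop :=
  ∃ a b : V, H.Adj a b ∧ K.verts = H.verts \ {b} ∧
    ∀ x y : V, K.Adj x y ↔ (x ≠ b ∧ y ≠ b ∧ x ≠ y ∧
      (H.Adj x y ∨ (x = a ∧ H.Adj b y) ∨ (y = a ∧ H.Adj x b)))

/-- `G` contains `Hpat` as a minor: some graph obtained from a subgraph of `G` by
contracting edges is isomorphic to `Hpat`. -/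
def HasMinor {W : Type*} (G : SimpleGraph V) (Hpat : SimpleGraph W) : Prop :=
  ∃ H₀ K : SimpleGraph.Subgraph (⊤ : SimpleGraph V),
    (∀ ⦃x y : V⦄, H₀.Adj x y → G.Adj x y) ∧ Relation.ReflTransGen ContractStep H₀ K ∧
      Nonempty (Hpat ≃g K.coe)

/-- Planarity, via Wagner's theorem: no `K₅`-minor and no `K₃,₃`-minor. -/
def IsPlanar (G : SimpleGraph V) : Prop :=
  ¬ HasMinor G (completeGraph (Fin 5)) ∧ ¬ HasMinor G (completeBipartiteGraph (Fin 3) (Fin 3))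

/-- A graph is triconnected if removing fewer than three vertices cannot disconnect it. -/
def Triconnected (G : SimpleGraph V) : Prop :=
  ∀ S : Set V, S.ncard < 3 → (G.induce Sᶜ).Preconnected

/-- A graph is claw-free if it has no induced `K_{1,3}`. -/
def ClawFree (G : SimpleGraph V) : Prop :=
  ∀ v a b c : V, G.Adj v a → G.Adj v b → G.Adj v c → a ≠ b → a ≠ c → b ≠ c →
    ¬ G.Adj a b → ¬ G.Adj a c → G.Adj b c

/-- The `xy`-extension of `G` determined by the induced subgraph on `D ∋ x, y` and `n` new
interior path vertices: for `n = 0` the edge `{x,y}` is added, otherwise an `xy`-path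
through `n` new vertices of degree two is added. -/
def ExtGraph (G : SimpleGraph V) (D : Set V) (x y : V) (n : ℕ) :
    SimpleGraph (↥D ⊕ Fin n) :=
  SimpleGraph.fromRel (fun a b =>
    match a, b with
    | Sum.inl u, Sum.inl v => G.Adj u v ∨ (n = 0 ∧ (u : V) = x ∧ (v : V) = y)
    | Sum.inl u, Sum.inr p => ((u : V) = x ∧ (p : ℕ) = 0) ∨ ((u : V) = y ∧ (p : ℕ) = n - 1)
    | Sum.inr p, Sum.inr q => (q : ℕ) = (p : ℕ) + 1
    | _, _ => False)

namespace ExtAux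

variable {V : Type*} {W : Type*}

/-- adjacency restricted to a vertex set -/
def AdjOn (G : SimpleGraph V) (B : Set V) (u v : V) : Prop :=
  u ∈ B ∧ v ∈ B ∧ G.Adj u v

lemma adjOn_symm {G : SimpleGraph V} {B : Set V} : Symmetric (AdjOn G B) :=
  fun _ _ h => ⟨h.2.1, h.1, h.2.2.symm⟩

/-- reachability within a vertex set -/
def Reach (G : SimpleGraph V) (B : Set V) (u v : V) : Prop :=
  Relation.ReflTransGen (AdjOn G B) u v

lemma Reach.symm {G : SimpleGraph V} {B : Set V} {u v : V} (h : Reach G B u v) :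
    Reach G B v u := by
  haveI : Std.Symm (AdjOn G B) := ⟨fun a b h => adjOn_symm h⟩
  exact Std.Symm.symm (r := Relation.ReflTransGen (AdjOn G B)) _ _ h

lemma Reach.mono {G : SimpleGraph V} {B B' : Set V} (hBB : B ⊆ B') {u v : V}
    (h : Reach G B u v) : Reach G B' u v :=
  Relation.ReflTransGen.mono (fun _ _ hab => ⟨hBB hab.1, hBB hab.2.1, hab.2.2⟩) _ _ h

def ConnOn (G : SimpleGraph V) (B : Set V) : Prop :=
  ∀ a ∈ B, ∀ b ∈ B, Reach G B a b

structure IsModel (G : SimpleGraph V) (H : SimpleGraph W) (B : W → Set V) : Prop where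
  nonempty : ∀ i, (B i).Nonempty
  conn : ∀ i, ConnOn G (B i)
  disj : ∀ i j, i ≠ j → Disjoint (B i) (B j)
  edge : ∀ i j, H.Adj i j → ∃ a ∈ B i, ∃ b ∈ B j, G.Adj a b

lemma connOn_singleton (G : SimpleGraph V) (v : V) : ConnOn G {v} := by
  intro a ha b hb
  rw [Set.mem_singleton_iff] at ha hb
  subst ha; subst hb; exact .refl

lemma connOn_union {G : SimpleGraph V} {B1 B2 : Set V} (h1 : ConnOn G B1) (h2 : ConnOn G B2)
    {a0 b0 : V} (ha0 : a0 ∈ B1) (hb0 : b0 ∈ B2) (hadj : G.Adj a0 b0) :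
    ConnOn G (B1 ∪ B2) := by
  have key : ∀ w ∈ B1 ∪ B2, Reach G (B1 ∪ B2) w a0 := by
    rintro w (hw | hw)
    · exact (h1 w hw a0 ha0).mono Set.subset_union_left
    · exact ((h2 w hw b0 hb0).mono Set.subset_union_right).tail
        ⟨Or.inr hb0, Or.inl ha0, hadj.symm⟩
  intro a ha b hb
  exact (key a ha).trans (key b hb).symm

lemma exists_exit {r : V → V → Prop} {T : Set V} {s c : V} (h : Relation.ReflTransGen r s c)
    (hs : s ∈ T) : c ∉ T → ∃ w w', w ∈ T ∧ w' ∉ T ∧ r w w' := by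
  induction h with
  | refl => exact fun hc => absurd hs hc
  | @tail b c h' step ih =>
    intro hc
    by_cases hb : b ∈ T
    · exact ⟨b, c, hb, hc, step⟩
    · exact ih hb

lemma reach_closed {G : SimpleGraph V} {B C : Set V} {s c : V}
    (h : Reach G B s c) (hs : s ∈ C)
    (hcl : ∀ w w', w ∈ C → AdjOn G B w w' → w' ∈ C) : c ∈ C := by
  induction h with
  | refl => exact hs
  | tail _ step ih => exact hcl _ _ ih step

lemma rtg_congr {α β : Type*} {r : α → α → Prop} {r' : β → β → Prop} (f : α → β)
    (hf : ∀ a b, r a b → Relation.ReflTransGen r' (f a) (f b)) {a b : α}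
    (h : Relation.ReflTransGen r a b) : Relation.ReflTransGen r' (f a) (f b) := by
  induction h with
  | refl => exact .refl
  | tail _ step ih => exact ih.trans (hf _ _ step)

section StepA

variable {G : SimpleGraph V} {H : SimpleGraph W}

lemma hasMinor_model (h : HasMinor G H) : ∃ B : W → Set V, IsModel G H B := by
  classical
  obtain ⟨H0, K, hsub, hrtg, ⟨e⟩⟩ := h
  suffices inv : ∃ Bf : V → Set V,
      (∀ v ∈ K.verts, v ∈ Bf v) ∧ (∀ v ∈ K.verts, ConnOn G (Bf v)) ∧
      (∀ u ∈ K.verts, ∀ v ∈ K.verts, u ≠ v → Disjoint (Bf u) (Bf v)) ∧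
      (∀ u v : V, K.Adj u v → ∃ a ∈ Bf u, ∃ b ∈ Bf v, G.Adj a b) by
    obtain ⟨Bf, hmem, hconn, hdisj, hedge⟩ := inv
    refine ⟨fun i => Bf ((e i : K.verts) : V), ⟨?_, ?_, ?_, ?_⟩⟩
    · exact fun i => ⟨_, hmem _ (e i).2⟩
    · exact fun i => hconn _ (e i).2
    · intro i j hij
      refine hdisj _ (e i).2 _ (e j).2 ?_
      intro hval
      exact hij (e.toEquiv.injective (Subtype.ext hval))
    · intro i j hij
      have : K.Adj (e i : K.verts) (e j : K.verts) := by
        have := e.map_rel_iff.mpr hij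
        exact this
      exact hedge _ _ this
  clear e
  induction hrtg with
  | refl =>
    refine ⟨fun v => {v}, fun v _ => rfl, fun v _ => connOn_singleton G v, ?_, ?_⟩
    · intro u _ v _ huv
      simp [huv]
    · intro u v huv
      exact ⟨u, rfl, v, rfl, hsub huv⟩
  | @tail Kmid Know _ step ih =>
    obtain ⟨Bf, hmem, hconn, hdisj, hedge⟩ := ih
    obtain ⟨a, b, habK, hverts, hiff⟩ := step
    have haM : a ∈ Kmid.verts := habK.fst_mem
    have hbM : b ∈ Kmid.verts := habK.snd_mem
    have hne : a ≠ b := habK.ne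
    obtain ⟨a0, ha0, b0, hb0, hG0⟩ := hedge a b habK
    have hsubB : ∀ w, Bf w ⊆ (fun v => if v = a then Bf a ∪ Bf b else Bf v) w := by
      intro w
      by_cases hw : w = a
      · subst hw; simp only [if_pos rfl]; exact Set.subset_union_left
      · simp only [if_neg hw]
        exact subset_rfl
    refine ⟨fun v => if v = a then Bf a ∪ Bf b else Bf v, ?_, ?_, ?_, ?_⟩
    · intro v hv
      rw [hverts] at hv
      exact hsubB v (hmem v hv.1)
    · intro v hv
      rw [hverts] at hv
      by_cases hva : v = a
      · simp only [if_pos hva]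
        exact connOn_union (hconn a haM) (hconn b hbM) ha0 hb0 hG0
      · simp only [if_neg hva]
        exact hconn v hv.1
    · intro u hu v hv huv
      rw [hverts] at hu hv
      by_cases hua : u = a
      · have hva : v ≠ a := fun hc => huv (hua.trans hc.symm)
        simp only [if_pos hua, if_neg hva]
        refine Set.disjoint_union_left.mpr ⟨hdisj _ haM _ hv.1 ?_, hdisj _ hbM _ hv.1 ?_⟩
        · exact fun hc => hva (hc.symm)
        · exact fun hc => hv.2 hc.symm
      · by_cases hva : v = a
        · simp only [if_neg hua, if_pos hva]
          refine Set.disjoint_union_right.mpr ⟨hdisj _ hu.1 _ haM ?_, hdisj _ hu.1 _ hbM ?_⟩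
          · exact fun hc => hua hc
          · exact fun hc => hu.2 hc
        · simp only [if_neg hua, if_neg hva]
          exact hdisj _ hu.1 _ hv.1 huv
    · intro u v huv
      rcases (hiff u v).mp huv with ⟨hub, hvb, hune, hcase⟩
      rcases hcase with hadj | ⟨hua, hadj⟩ | ⟨hva, hadj⟩
      · obtain ⟨p, hp, q, hq, hpq⟩ := hedge u v hadj
        exact ⟨p, hsubB u hp, q, hsubB v hq, hpq⟩
      · obtain ⟨p, hp, q, hq, hpq⟩ := hedge b v hadj
        refine ⟨p, ?_, q, hsubB v hq, hpq⟩
        simp only [if_pos hua]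
        exact Or.inr hp
      · obtain ⟨p, hp, q, hq, hpq⟩ := hedge u b hadj
        refine ⟨p, hsubB u hp, q, ?_, hpq⟩
        simp only [if_pos hva]
        exact Or.inr hq

end StepA

end ExtAux
namespace ExtAux

variable {V : Type*} {W : Type*}

section StepD

variable [Fintype V] {G : SimpleGraph V} {H : SimpleGraph W}

lemma model_hasMinor {B : W → Set V} (hM : IsModel G H B) : HasMinor G H := by
  classical
  -- representatives
  have hrep : ∀ i, (hM.nonempty i).choose ∈ B i := fun i => (hM.nonempty i).choose_spec
  set rep : W → V := fun i => (hM.nonempty i).choose with hrepdef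
  have mem_unique : ∀ {c : V} {i j : W}, c ∈ B i → c ∈ B j → i = j := by
    intro c i j hi hj
    by_contra hij
    exact (hM.disj i j hij).ne_of_mem hi hj rfl
  have rep_inj : Function.Injective rep := by
    intro i j hij
    apply mem_unique (hrep i)
    show rep i ∈ B j
    rw [hij]
    exact hrep j
  set UB : Set V := ⋃ i, B i with hUBdef
  have memUB : ∀ {c : V} {i : W}, c ∈ B i → c ∈ UB := by
    intro c i hc
    exact Set.mem_iUnion.mpr ⟨i, hc⟩
  have repUB : ∀ i, rep i ∈ UB := fun i => memUB (hrep i)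
  -- the quotient map
  set g : V → V := fun a => if h : ∃ i, a ∈ B i then rep h.choose else a with hgdef
  have g_eq : ∀ {a : V} {i : W}, a ∈ B i → g a = rep i := by
    intro a i ha
    have hex : ∃ j, a ∈ B j := ⟨i, ha⟩
    have : hex.choose = i := mem_unique hex.choose_spec ha
    simp only [hgdef, dif_pos hex, this]
  set gM : Set V → V → V := fun M a => if a ∈ M then g a else a with hgMdef
  -- the base subgraph
  set H0 : SimpleGraph.Subgraph (⊤ : SimpleGraph V) :=
    { verts := UB
      Adj := fun u v => ∃ i j, u ∈ B i ∧ v ∈ B j ∧ G.Adj u v ∧ (i = j ∨ H.Adj i j)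
      adj_sub := by
        rintro u v ⟨i, j, _, _, hGuv, _⟩
        simpa using hGuv.ne
      edge_vert := by
        rintro u v ⟨i, j, hu, _, _, _⟩
        exact memUB hu
      symm := by
        constructor
        rintro u v ⟨i, j, hu, hv, hGuv, hor⟩
        exact ⟨j, i, hv, hu, hGuv.symm, by tauto⟩ } with hH0def
  have hH0G : ∀ ⦃u v : V⦄, H0.Adj u v → G.Adj u v := by
    rintro u v ⟨i, j, _, _, hGuv, _⟩
    exact hGuv
  -- quotient subgraphs
  set Q : Set V → SimpleGraph.Subgraph (⊤ : SimpleGraph V) := fun M =>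
    { verts := UB \ M
      Adj := fun u v => u ∈ UB ∧ v ∈ UB ∧ u ∉ M ∧ v ∉ M ∧ u ≠ v ∧
        ∃ a b, H0.Adj a b ∧ gM M a = u ∧ gM M b = v
      adj_sub := by
        rintro u v ⟨_, _, _, _, huv, _⟩
        simpa using huv
      edge_vert := by
        rintro u v ⟨hu, _, hu', _, _, _⟩
        exact ⟨hu, hu'⟩
      symm := by
        constructor
        rintro u v ⟨hu, hv, hu', hv', huv, a, b, hab, ha, hb⟩
        exact ⟨hv, hu, hv', hu', huv.symm, b, a, hab.symm, hb, ha⟩ } with hQdef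
  have hQ0 : Q ∅ = H0 := by
    apply SimpleGraph.Subgraph.ext
    · simp [hQdef, hH0def]
    · funext u v
      simp only [hQdef]
      apply propext
      constructor
      · rintro ⟨_, _, _, _, _, a, b, hab, ha, hb⟩
        simp only [hgMdef, Set.mem_empty_iff_false, if_false] at ha hb
        rwa [← ha, ← hb]
      · intro h
        have h2 := h
        obtain ⟨i, j, hu, hv, hGuv, _⟩ := h2
        exact ⟨memUB hu, memUB hv, Set.notMem_empty u, Set.notMem_empty v, hGuv.ne,
          u, v, h, by simp [hgMdef], by simp [hgMdef]⟩
  set Mf : Set V := UB \ Set.range rep with hMfdef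
  have repMf : ∀ i, rep i ∉ Mf := fun i hi => hi.2 ⟨i, rfl⟩
  -- the contraction sequence
  have main : ∀ (k : ℕ) (M : Set V), M ⊆ UB → (∀ j, rep j ∉ M) →
      (UB \ (M ∪ Set.range rep)).ncard = k →
      Relation.ReflTransGen ContractStep (Q M) (Q Mf) := by
    intro k
    induction k with
    | zero =>
      intro M hMU hMr hcard
      have hempty : UB \ (M ∪ Set.range rep) = ∅ :=
        (Set.ncard_eq_zero (Set.toFinite _)).mp hcard
      have : M = Mf := by
        apply Set.eq_of_subset_of_subset
        · intro a haM
          exact ⟨hMU haM, fun ⟨j, hj⟩ => hMr j (hj ▸ haM)⟩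
        · intro a haMf
          by_contra haM
          have : a ∈ UB \ (M ∪ Set.range rep) := ⟨haMf.1, fun hc => hc.elim haM haMf.2⟩
          rw [hempty] at this
          exact this
      rw [this]
    | succ k ih =>
      intro M hMU hMr hcard
      have hne0 : (UB \ (M ∪ Set.range rep)).Nonempty := by
        rw [Set.nonempty_iff_ne_empty]
        intro hc
        rw [hc] at hcard
        simp at hcard
      obtain ⟨c, hcU, hcMr⟩ := hne0
      have hcM : c ∉ M := fun hc => hcMr (Or.inl hc)
      have hcr : c ∉ Set.range rep := fun hc => hcMr (Or.inr hc)
      obtain ⟨i, hci⟩ := Set.mem_iUnion.mp hcU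
      -- find the merge vertex b
      have hchain : Reach G (B i) (rep i) c := hM.conn i (rep i) (hrep i) c hci
      have hcT : c ∉ M ∪ {rep i} := by
        rintro (h | h)
        · exact hcM h
        · exact hcr ⟨i, h.symm⟩
      obtain ⟨w, b, hwT, hbT, hstep⟩ :=
        exists_exit (T := M ∪ {rep i}) hchain (Or.inr rfl) hcT
      obtain ⟨hwB, hbB, hGwb⟩ := hstep
      have hbM : b ∉ M := fun hc => hbT (Or.inl hc)
      have hbrep : b ≠ rep i := fun hc => hbT (Or.inr hc)
      have hbr : b ∉ Set.range rep := by
        rintro ⟨j, rfl⟩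
        exact hbrep (congrArg rep (mem_unique (hrep j) hbB))
      have hgw : gM M w = rep i := by
        rcases hwT with hw | hw
        · simp only [hgMdef, if_pos hw]
          exact g_eq hwB
        · simp only [hgMdef]
          rcases Set.mem_singleton_iff.mp hw with rfl
          rw [if_neg (hMr i)]
      have hQadj : (Q M).Adj (rep i) b := by
        refine ⟨repUB i, memUB hbB, hMr i, hbM, fun hc => hbrep hc.symm, w, b, ?_, hgw, ?_⟩
        · exact ⟨i, i, hwB, hbB, hGwb, Or.inl rfl⟩
        · simp only [hgMdef, if_neg hbM]
      -- the contract step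
      have hgM' : ∀ a : V, gM (insert b M) a = if a = b then rep i else gM M a := by
        intro a
        by_cases hab : a = b
        · subst hab
          simp only [hgMdef, if_pos (Set.mem_insert _ _), if_pos rfl]
          exact g_eq hbB
        · simp only [hgMdef, if_neg hab]
          by_cases haM : a ∈ M
          · rw [if_pos haM, if_pos (Set.mem_insert_of_mem _ haM)]
          · rw [if_neg haM, if_neg (fun hc => (Set.mem_insert_iff.mp hc).elim hab haM)]
      have hcs : ContractStep (Q M) (Q (insert b M)) := by
        refine ⟨rep i, b, hQadj, ?_, ?_⟩
        · simp only [hQdef]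
          rw [Set.insert_eq, Set.union_comm, ← Set.diff_diff]
        · intro p q
          constructor
          · rintro ⟨hpU, hqU, hpM', hqM', hpq, a, a', hH0a, hga, hga'⟩
            have hpb : p ≠ b := fun hc => hpM' (hc ▸ Set.mem_insert _ _)
            have hqb : q ≠ b := fun hc => hqM' (hc ▸ Set.mem_insert _ _)
            have hpM : p ∉ M := fun hc => hpM' (Set.mem_insert_of_mem _ hc)
            have hqM : q ∉ M := fun hc => hqM' (Set.mem_insert_of_mem _ hc)
            refine ⟨hpb, hqb, hpq, ?_⟩
            rw [hgM'] at hga hga'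
            by_cases hab : a = b <;> by_cases hab' : a' = b
            · exfalso
              rw [if_pos hab] at hga
              rw [if_pos hab'] at hga'
              exact hpq (hga.symm.trans hga')
            · rw [if_pos hab] at hga
              rw [if_neg hab'] at hga'
              refine Or.inr (Or.inl ⟨hga.symm, ?_⟩)
              exact ⟨memUB hbB, hqU, hbM, hqM, fun hc => hqb hc.symm, b, a',
                hab ▸ hH0a, by simp [hgMdef, if_neg hbM], hga'⟩
            · rw [if_neg hab] at hga
              rw [if_pos hab'] at hga'
              refine Or.inr (Or.inr ⟨hga'.symm, ?_⟩)
              exact ⟨hpU, memUB hbB, hpM, hbM, fun hc => hpb hc, a, b,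
                hab' ▸ hH0a, hga, by simp [hgMdef, if_neg hbM]⟩
            · rw [if_neg hab] at hga
              rw [if_neg hab'] at hga'
              exact Or.inl ⟨hpU, hqU, hpM, hqM, hpq, a, a', hH0a, hga, hga'⟩
          · rintro ⟨hpb, hqb, hpq, hcase⟩
            rcases hcase with hQpq | ⟨hpr, hQbq⟩ | ⟨hqr, hQpb⟩
            · obtain ⟨hpU, hqU, hpM, hqM, _, a, a', hH0a, hga, hga'⟩ := hQpq
              have hab : a ≠ b := by
                intro hc
                subst hc
                rw [hgMdef] at hga
                simp only [if_neg hbM] at hga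
                exact hpb hga.symm
              have hab' : a' ≠ b := by
                intro hc
                subst hc
                rw [hgMdef] at hga'
                simp only [if_neg hbM] at hga'
                exact hqb hga'.symm
              refine ⟨hpU, hqU, ?_, ?_, hpq, a, a', hH0a, ?_, ?_⟩
              · exact fun hc => (Set.mem_insert_iff.mp hc).elim hpb hpM
              · exact fun hc => (Set.mem_insert_iff.mp hc).elim hqb hqM
              · rw [hgM', if_neg hab]; exact hga
              · rw [hgM', if_neg hab']; exact hga'
            · obtain ⟨_, hqU, hbM2, hqM, hbq, a, a', hH0a, hga, hga'⟩ := hQbq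
              have hab : a = b := by
                by_contra hc
                rw [hgMdef] at hga
                by_cases haM : a ∈ M
                · simp only [if_pos haM] at hga
                  obtain ⟨j, haj⟩ := Set.mem_iUnion.mp (hMU haM)
                  rw [g_eq haj] at hga
                  exact hbr ⟨j, hga⟩
                · simp only [if_neg haM] at hga
                  exact hc hga
              have hab' : a' ≠ b := by
                intro hc
                subst hc
                rw [hgMdef] at hga'
                simp only [if_neg hbM] at hga'
                exact hqb hga'.symm
              refine ⟨hpr ▸ repUB i, hqU, ?_, ?_, hpq, b, a', hab ▸ hH0a, ?_, ?_⟩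
              · rintro hc
                rcases Set.mem_insert_iff.mp hc with hc | hc
                · exact hpb hc
                · exact hMr i (hpr ▸ hc)
              · exact fun hc => (Set.mem_insert_iff.mp hc).elim hqb hqM
              · rw [hgM', if_pos rfl, hpr]
              · rw [hgM', if_neg hab']; exact hga'
            · obtain ⟨hpU, _, hpM, hbM2, hpbne, a, a', hH0a, hga, hga'⟩ := hQpb
              have hab' : a' = b := by
                by_contra hc
                rw [hgMdef] at hga'
                by_cases haM : a' ∈ M
                · simp only [if_pos haM] at hga'
                  obtain ⟨j, haj⟩ := Set.mem_iUnion.mp (hMU haM)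
                  rw [g_eq haj] at hga'
                  exact hbr ⟨j, hga'⟩
                · simp only [if_neg haM] at hga'
                  exact hc hga'
              have hab : a ≠ b := by
                intro hc
                subst hc
                rw [hgMdef] at hga
                simp only [if_neg hbM] at hga
                exact hpb hga.symm
              refine ⟨hpU, hqr ▸ repUB i, ?_, ?_, hpq, a, b, hab' ▸ hH0a, ?_, ?_⟩
              · exact fun hc => (Set.mem_insert_iff.mp hc).elim hpb hpM
              · rintro hc
                rcases Set.mem_insert_iff.mp hc with hc | hc
                · exact hqb hc
                · exact hMr i (hqr ▸ hc)
              · rw [hgM', if_neg hab]; exact hga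
              · rw [hgM', if_pos rfl, hqr]
      -- recurse
      have hsetstep : UB \ (insert b M ∪ Set.range rep) =
          (UB \ (M ∪ Set.range rep)) \ {b} := by
        ext a
        simp only [Set.mem_diff, Set.mem_union, Set.mem_insert_iff, Set.mem_singleton_iff]
        tauto
      have hbmem : b ∈ UB \ (M ∪ Set.range rep) := by
        refine ⟨memUB hbB, ?_⟩
        rintro (h | h)
        · exact hbM h
        · exact hbr h
      have hcard' : (UB \ (insert b M ∪ Set.range rep)).ncard = k := by
        rw [hsetstep, Set.ncard_diff_singleton_of_mem hbmem, hcard]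
        rfl
      have hins : ∀ j, rep j ∉ insert b M := by
        intro j hc
        rcases Set.mem_insert_iff.mp hc with hc | hc
        · exact hbr ⟨j, hc⟩
        · exact hMr j hc
      have hinsU : insert b M ⊆ UB := by
        intro a ha
        rcases Set.mem_insert_iff.mp ha with rfl | ha
        · exact memUB hbB
        · exact hMU ha
      exact Relation.ReflTransGen.head hcs (ih (insert b M) hinsU hins hcard')
  have hR : Relation.ReflTransGen ContractStep H0 (Q Mf) := by
    rw [← hQ0]
    exact main _ ∅ (Set.empty_subset _) (fun j => Set.notMem_empty _) rfl
  -- the isomorphism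
  have hfmem : ∀ i, rep i ∈ (Q Mf).verts := by
    intro i
    exact ⟨repUB i, repMf i⟩
  have hgMf : ∀ {a : V} {i : W}, a ∈ B i → gM Mf a = rep i := by
    intro a i ha
    by_cases haM : a ∈ Mf
    · simp only [hgMdef, if_pos haM]
      exact g_eq ha
    · simp only [hgMdef, if_neg haM]
      have : a ∈ Set.range rep := by
        by_contra hc
        exact haM ⟨memUB ha, hc⟩
      obtain ⟨j, rfl⟩ := this
      exact congrArg rep (mem_unique (hrep j) ha)
  have hbij : Function.Bijective (fun i => (⟨rep i, hfmem i⟩ : (Q Mf).verts)) := by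
    constructor
    · intro i j hij
      exact rep_inj (congrArg Subtype.val hij)
    · rintro ⟨v, hvU, hvM⟩
      have : v ∈ Set.range rep := by
        by_contra hc
        exact hvM ⟨hvU, hc⟩
      obtain ⟨i, rfl⟩ := this
      exact ⟨i, rfl⟩
  have hiso : H ≃g (Q Mf).coe := by
    refine ⟨Equiv.ofBijective _ hbij, ?_⟩
    intro i j
    simp only [Equiv.ofBijective_apply, SimpleGraph.Subgraph.coe_adj]
    constructor
    · rintro ⟨_, _, _, _, hne, a, a', hH0a, hga, hga'⟩
      obtain ⟨i', j', hai', haj', hGaa', hor⟩ := hH0a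
      rw [hgMf hai'] at hga
      rw [hgMf haj'] at hga'
      have hii : i' = i := rep_inj hga
      have hjj : j' = j := rep_inj hga'
      subst hii; subst hjj
      rcases hor with rfl | h
      · exact absurd rfl hne
      · exact h
    · intro hij
      obtain ⟨a, ha, a', ha', hGaa'⟩ := hM.edge i j hij
      refine ⟨repUB i, repUB j, repMf i, repMf j, ?_, a, a',
        ⟨i, j, ha, ha', hGaa', Or.inr hij⟩, hgMf ha, hgMf ha'⟩
      intro hc
      exact hij.ne (rep_inj hc)
  exact ⟨H0, Q Mf, hH0G, hR, ⟨hiso⟩⟩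

end StepD

end ExtAux
namespace ExtAux

variable {V : Type*} {W : Type*}

/-- `G` together with the edge `xy`. -/
def Gplus (G : SimpleGraph V) (x y : V) : SimpleGraph V :=
  G ⊔ SimpleGraph.fromRel (fun a b => a = x ∧ b = y)

lemma gplus_adj {G : SimpleGraph V} {x y a b : V} :
    (Gplus G x y).Adj a b ↔ G.Adj a b ∨ (a ≠ b ∧ ((a = x ∧ b = y) ∨ (b = x ∧ a = y))) := by
  simp only [Gplus, SimpleGraph.sup_adj, SimpleGraph.fromRel_adj]

lemma gplus_adj_xy {G : SimpleGraph V} {x y : V} (hxy : x ≠ y) : (Gplus G x y).Adj x y :=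
  gplus_adj.mpr (Or.inr ⟨hxy, Or.inl ⟨rfl, rfl⟩⟩)

lemma reachIn_iff {G : SimpleGraph V} {Ws : Set V} {a b : V} :
    ReachIn G Ws a b ↔ a ∈ Ws ∧ b ∈ Ws ∧ Reach G Ws a b := by
  constructor
  · rintro ⟨ha, hb, ⟨p⟩⟩
    refine ⟨ha, hb, ?_⟩
    have key : ∀ (s t : Ws), (G.induce Ws).Walk s t → Reach G Ws (s : V) (t : V) := by
      intro s t p
      induction p with
      | nil => exact .refl
      | @cons s m t h p ih =>
        exact Relation.ReflTransGen.head ⟨s.2, m.2, h⟩ ih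
    exact key _ _ p
  · rintro ⟨ha, hb, hr⟩
    refine ⟨ha, hb, ?_⟩
    have key : ∀ (c : V), Reach G Ws a c → ∀ (hc : c ∈ Ws),
        (G.induce Ws).Reachable ⟨a, ha⟩ ⟨c, hc⟩ := by
      intro c hr
      induction hr with
      | refl => intro hc; rfl
      | @tail m c h' step ih =>
        intro hc
        refine (ih step.1).trans ?_
        exact SimpleGraph.Adj.reachable (by exact step.2.2)
    exact key b hr hb
end ExtAux
namespace ExtAux

variable {V : Type*} {W : Type*}

/-- the component of `u` in `G - {a,b}` -/
def Comp (G : SimpleGraph V) (a b u : V) : Set V :=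
  {w | w ∉ ({a, b} : Set V) ∧ Reach G ({a, b} : Set V)ᶜ u w}

lemma comp_closed {G : SimpleGraph V} {a b u : V} {w w' : V} (hw : w ∈ Comp G a b u)
    (hadj : G.Adj w w') (hw' : w' ∉ ({a, b} : Set V)) : w' ∈ Comp G a b u :=
  ⟨hw', hw.2.tail ⟨hw.1, hw', hadj⟩⟩

lemma comp_connOn {G : SimpleGraph V} {a b u : V} (hu : u ∉ ({a, b} : Set V)) :
    ConnOn G (Comp G a b u) := by
  have key : ∀ w ∈ Comp G a b u, Reach G (Comp G a b u) u w := by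
    rintro w ⟨hwS, hr⟩
    clear hwS
    induction hr with
    | refl => exact .refl
    | @tail m c h' step ih =>
      have hm : m ∈ Comp G a b u := ⟨step.1, h'⟩
      have hc : c ∈ Comp G a b u := ⟨step.2.1, h'.tail step⟩
      exact ih.tail ⟨hm, hc, step.2.2⟩
  intro p hp q hq
  exact (key p hp).symm.trans (key q hq)

lemma mem_comp_self {G : SimpleGraph V} {a b u : V} (hu : u ∉ ({a, b} : Set V)) :
    u ∈ Comp G a b u := ⟨hu, .refl⟩

/-- Existence of a neighbor of `a` in the component of `u`, from minimality. -/
lemma exists_nbr_comp {G : SimpleGraph V} {a b u v : V}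
    (hu : u ∉ ({a, b} : Set V)) (hv : v ∉ ({a, b} : Set V))
    (hre : G.Reachable u v) (hnr : ¬ Reach G ({a, b} : Set V)ᶜ u v)
    (hmin : ¬ Separates G {b}) :
    ∃ c ∈ Comp G a b u, G.Adj a c := by
  by_contra hno
  push_neg at hno
  apply hmin
  have hub : u ∉ ({b} : Set V) := fun hc => hu (by simp [Set.mem_singleton_iff.mp hc])
  have hvb : v ∉ ({b} : Set V) := fun hc => hv (by simp [Set.mem_singleton_iff.mp hc])
  refine ⟨u, v, hub, hvb, hre, ?_⟩
  intro hri
  rw [reachIn_iff] at hri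
  obtain ⟨_, _, hr⟩ := hri
  have hstay : ∀ w', Reach G ({b} : Set V)ᶜ u w' → w' ∈ Comp G a b u := by
    intro w' h
    induction h with
    | refl => exact mem_comp_self hu
    | @tail m c h' step ih =>
      have hca : c ≠ a := by
        intro hc
        subst hc
        exact hno m ih step.2.2.symm
      have hcS : c ∉ ({a, b} : Set V) := by
        intro hc
        rcases hc with hc | hc
        · exact hca hc
        · exact step.2.1 hc
      exact comp_closed ih step.2.2 hcS
  exact hnr (hstay v hr).2

end ExtAux
namespace ExtAux

variable {V : Type*} {W : Type*}

lemma reach_transfer {r : V → V → Prop} {G : SimpleGraph V} {Bset : Set V}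
    (hf : ∀ s t, r s t → Reach G Bset s t) {a b : V} (h : Relation.ReflTransGen r a b) :
    Reach G Bset a b := by
  induction h with
  | refl => exact .refl
  | tail _ step ih => exact ih.trans (hf _ _ step)

lemma partial_mem {G : SimpleGraph V} {x y : V} {Bset C : Set V}
    (hconn : ConnOn (Gplus G x y) Bset)
    (hCx : x ∉ C) (hCy : y ∉ C)
    (hCcl : ∀ w w', w ∈ C → G.Adj w w' → w' ∉ ({x, y} : Set V) → w' ∈ C)
    (hmeets : (Bset ∩ C).Nonempty) (hnot : ¬ Bset ⊆ C) :
    x ∈ Bset ∨ y ∈ Bset := by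
  obtain ⟨c0, hc0B, hc0C⟩ := hmeets
  obtain ⟨d0, hd0B, hd0C⟩ := Set.not_subset.mp hnot
  obtain ⟨w, w', hwC, hw'C, hwB, hw'B, hGp⟩ :
      ∃ w w', w ∈ C ∧ w' ∉ C ∧ w ∈ Bset ∧ w' ∈ Bset ∧ (Gplus G x y).Adj w w' := by
    obtain ⟨w, w', hw, hw', step⟩ := exists_exit (T := C) (hconn c0 hc0B d0 hd0B) hc0C hd0C
    exact ⟨w, w', hw, hw', step.1, step.2.1, step.2.2⟩
  rcases gplus_adj.mp hGp with hG | ⟨_, ⟨hwx, hw'y⟩ | ⟨hw'x, hwy⟩⟩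
  · by_cases hw'S : w' ∈ ({x, y} : Set V)
    · rcases Set.mem_insert_iff.mp hw'S with hc | hc
      · exact Or.inl (hc ▸ hw'B)
      · exact Or.inr ((Set.mem_singleton_iff.mp hc) ▸ hw'B)
    · exact absurd (hCcl w w' hwC hG hw'S) hw'C
  · exact absurd (hwx ▸ hwC) hCx
  · exact absurd (hwy ▸ hwC) hCy

lemma stepC_easy {G : SimpleGraph V} {H : SimpleGraph W} {x y : V}
    {B : W → Set V} (hM : IsModel (Gplus G x y) H B)
    (hmiss : (∀ i, x ∉ B i) ∨ (∀ i, y ∉ B i)) : IsModel G H B := by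
  have hadj : ∀ {a b : V} {i j : W}, a ∈ B i → b ∈ B j → (Gplus G x y).Adj a b →
      G.Adj a b := by
    intro a b i j ha hb hGp
    rcases gplus_adj.mp hGp with h | ⟨_, ⟨rfl, rfl⟩ | ⟨rfl, rfl⟩⟩
    · exact h
    · rcases hmiss with hm | hm
      · exact absurd ha (hm i)
      · exact absurd hb (hm j)
    · rcases hmiss with hm | hm
      · exact absurd hb (hm j)
      · exact absurd ha (hm i)
  refine ⟨hM.nonempty, ?_, hM.disj, ?_⟩
  · intro i p hp q hq
    exact Relation.ReflTransGen.mono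
      (fun s t hst => ⟨hst.1, hst.2.1, hadj hst.1 hst.2.1 hst.2.2⟩) _ _ (hM.conn i p hp q hq)
  · intro i j hij
    obtain ⟨a, ha, b, hb, hGp⟩ := hM.edge i j hij
    exact ⟨a, ha, b, hb, hadj ha hb hGp⟩

lemma surgery {G : SimpleGraph V} {H : SimpleGraph W} {x y : V}
    {B : W → Set V} (hM : IsModel (Gplus G x y) H B)
    {C : Set V} (hCx : x ∉ C) (hCy : y ∉ C)
    (hCcl : ∀ w w', w ∈ C → G.Adj w w' → w' ∉ ({x, y} : Set V) → w' ∈ C)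
    (hCconn : ConnOn G C)
    (hcx : ∃ c ∈ C, G.Adj x c) (hcy : ∃ c ∈ C, G.Adj y c)
    (hfull : ∀ h, ¬ B h ⊆ C)
    {i₁ i₂ : W} (hxi : x ∈ B i₁) (hyi : y ∈ B i₂) :
    ∃ B' : W → Set V, IsModel G H B' := by
  classical
  obtain ⟨cx, hcxC, hcxadj⟩ := hcx
  obtain ⟨cy, hcyC, hcyadj⟩ := hcy
  have hxonly : ∀ h, h ≠ i₁ → x ∉ B h :=
    fun h hne hc => (hM.disj h i₁ hne).ne_of_mem hc hxi rfl
  have hyonly : ∀ h, h ≠ i₂ → y ∉ B h :=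
    fun h hne hc => (hM.disj h i₂ hne).ne_of_mem hc hyi rfl
  have hBC : ∀ h, h ≠ i₁ → h ≠ i₂ → B h ∩ C = ∅ := by
    intro h h1 h2
    by_contra hc
    rcases partial_mem (hM.conn h) hCx hCy hCcl (Set.nonempty_iff_ne_empty.mpr hc)
      (hfull h) with hxh | hyh
    · exact hxonly h h1 hxh
    · exact hyonly h h2 hyh
  have hBCmem : ∀ {h c}, h ≠ i₁ → h ≠ i₂ → c ∈ B h → c ∉ C := by
    intro h c h1 h2 hcB hcC
    exact Set.notMem_empty c ((hBC h h1 h2) ▸ Set.mem_inter hcB hcC)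
  refine ⟨fun h => if h = i₁ then B i₁ ∪ C else B h \ C, ?_, ?_, ?_, ?_⟩
  · -- nonempty
    intro h
    by_cases h1 : h = i₁
    · rw [if_pos h1]; exact ⟨x, Or.inl hxi⟩
    · rw [if_neg h1]
      by_cases h2 : h = i₂
      · exact ⟨y, by rw [h2]; exact hyi, hCy⟩
      · obtain ⟨c, hcB⟩ := hM.nonempty h
        exact ⟨c, hcB, hBCmem h1 h2 hcB⟩
  · -- connectivity
    intro h
    by_cases h1 : h = i₁
    · rw [if_pos h1]
      have hstep1 : ∀ s t, AdjOn (Gplus G x y) (B i₁) s t → Reach G (B i₁ ∪ C) s t := by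
        rintro s t ⟨hs, ht, hGp⟩
        rcases gplus_adj.mp hGp with hG | ⟨_, ⟨rfl, rfl⟩ | ⟨rfl, rfl⟩⟩
        · exact Relation.ReflTransGen.single ⟨Or.inl hs, Or.inl ht, hG⟩
        · exact Relation.ReflTransGen.head ⟨Or.inl hs, Or.inr hcxC, hcxadj⟩
            (((hCconn cx hcxC cy hcyC).mono Set.subset_union_right).tail
              ⟨Or.inr hcyC, Or.inl ht, hcyadj.symm⟩)
        · exact Reach.symm (Relation.ReflTransGen.head ⟨Or.inl ht, Or.inr hcxC, hcxadj⟩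
            (((hCconn cx hcxC cy hcyC).mono Set.subset_union_right).tail
              ⟨Or.inr hcyC, Or.inl hs, hcyadj.symm⟩))
      have key : ∀ w ∈ B i₁ ∪ C, Reach G (B i₁ ∪ C) w x := by
        rintro w (hw | hw)
        · exact reach_transfer hstep1 (hM.conn i₁ w hw x hxi)
        · exact ((hCconn w hw cx hcxC).mono Set.subset_union_right).tail
            ⟨Or.inr hcxC, Or.inl hxi, hcxadj.symm⟩
      intro p hp q hq
      exact (key p hp).trans (Reach.symm (key q hq))
    · rw [if_neg h1]
      by_cases h2 : h = i₂
      · rw [h2]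
        have h1' : i₂ ≠ i₁ := fun hc => h1 (h2.trans hc)
        have hGchain : ∀ s t, AdjOn (Gplus G x y) (B i₂) s t → AdjOn G (B i₂) s t := by
          rintro s t ⟨hs, ht, hGp⟩
          refine ⟨hs, ht, ?_⟩
          rcases gplus_adj.mp hGp with hG | ⟨_, ⟨rfl, rfl⟩ | ⟨rfl, rfl⟩⟩
          · exact hG
          · exact absurd hs (hxonly i₂ h1')
          · exact absurd ht (hxonly i₂ h1')
        have avoid : ∀ w, Reach G (B i₂) w y → w ∉ C → Reach G (B i₂ \ C) w y := by
          intro w hchain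
          induction hchain using Relation.ReflTransGen.head_induction_on with
          | refl => exact fun _ => .refl
          | @head w m step h' ih =>
            intro hwC
            by_cases hmC : m ∈ C
            · have hwS : w ∈ ({x, y} : Set V) := by
                by_contra hwS
                exact hwC (hCcl m w hmC step.2.2.symm hwS)
              have hwy : w = y := by
                rcases Set.mem_insert_iff.mp hwS with hc | hc
                · exact absurd (hc ▸ step.1) (hxonly i₂ h1')
                · exact Set.mem_singleton_iff.mp hc
              rw [hwy]
              exact .refl
            · exact Relation.ReflTransGen.head ⟨⟨step.1, hwC⟩, ⟨step.2.1, hmC⟩, step.2.2⟩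
                (ih hmC)
        intro p hp q hq
        have hpy := avoid p (Relation.ReflTransGen.mono hGchain _ _
          (hM.conn i₂ p hp.1 y hyi)) hp.2
        have hqy := avoid q (Relation.ReflTransGen.mono hGchain _ _
          (hM.conn i₂ q hq.1 y hyi)) hq.2
        exact hpy.trans (Reach.symm hqy)
      · have hGstep : ∀ s t, AdjOn (Gplus G x y) (B h) s t → AdjOn G (B h \ C) s t := by
          rintro s t ⟨hs, ht, hGp⟩
          refine ⟨⟨hs, hBCmem h1 h2 hs⟩, ⟨ht, hBCmem h1 h2 ht⟩, ?_⟩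
          rcases gplus_adj.mp hGp with hG | ⟨_, ⟨rfl, rfl⟩ | ⟨rfl, rfl⟩⟩
          · exact hG
          · exact absurd hs (hxonly h h1)
          · exact absurd ht (hxonly h h1)
        intro p hp q hq
        exact Relation.ReflTransGen.mono hGstep _ _ (hM.conn h p hp.1 q hq.1)
  · -- disjointness
    intro h h' hne
    by_cases h1 : h = i₁ <;> by_cases h1' : h' = i₁
    · exact absurd (h1.trans h1'.symm) hne
    · rw [if_pos h1, if_neg h1']
      have hne' : i₁ ≠ h' := fun hc => hne (h1.trans hc)
      refine Set.disjoint_union_left.mpr ⟨?_, ?_⟩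
      · exact Set.disjoint_of_subset_right Set.diff_subset (hM.disj i₁ h' hne')
      · exact Set.disjoint_sdiff_right
    · rw [if_neg h1, if_pos h1']
      have hne' : h ≠ i₁ := h1
      refine Set.disjoint_union_right.mpr ⟨?_, ?_⟩
      · exact Set.disjoint_of_subset_left Set.diff_subset (hM.disj h i₁ hne')
      · exact Set.disjoint_sdiff_left
    · rw [if_neg h1, if_neg h1']
      exact Set.disjoint_of_subset Set.diff_subset Set.diff_subset (hM.disj h h' hne)
  · -- edges
    intro h h' hadjH
    have hnehh : h ≠ h' := hadjH.ne
    obtain ⟨a, haB, b, hbB, hGp⟩ := hM.edge h h' hadjH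
    by_cases h1 : h = i₁ <;> by_cases h1' : h' = i₁
    · exact absurd (h1.trans h1'.symm) hnehh
    · rw [if_pos h1, if_neg h1']
      by_cases h2' : h' = i₂
      · exact ⟨cy, Or.inr hcyC, y, by rw [h2']; exact ⟨hyi, hCy⟩, hcyadj.symm⟩
      · rcases gplus_adj.mp hGp with hG | ⟨_, ⟨hax, hby⟩ | ⟨hbx, hay⟩⟩
        · exact ⟨a, Or.inl (h1 ▸ haB), b, ⟨hbB, hBCmem h1' h2' hbB⟩, hG⟩
        · exact absurd (hby ▸ hbB) (hyonly h' h2')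
        · exact absurd (hbx ▸ hbB) (hxonly h' h1')
    · rw [if_neg h1, if_pos h1']
      by_cases h2 : h = i₂
      · exact ⟨y, by rw [h2]; exact ⟨hyi, hCy⟩, cy, Or.inr hcyC, hcyadj⟩
      · rcases gplus_adj.mp hGp with hG | ⟨_, ⟨hax, hby⟩ | ⟨hbx, hay⟩⟩
        · exact ⟨a, ⟨haB, hBCmem h1 h2 haB⟩, b, Or.inl (h1' ▸ hbB), hG⟩
        · exact absurd (hax ▸ haB) (hxonly h h1)
        · exact absurd (hay ▸ haB) (hyonly h h2)
    · rw [if_neg h1, if_neg h1']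
      have hGedge : G.Adj a b := by
        rcases gplus_adj.mp hGp with hG | ⟨_, ⟨hax, hby⟩ | ⟨hbx, hay⟩⟩
        · exact hG
        · exact absurd (hax ▸ haB) (hxonly h h1)
        · exact absurd (hbx ▸ hbB) (hxonly h' h1')
      have haC : a ∉ C := by
        intro haC
        by_cases h2 : h = i₂
        · by_cases hbS : b ∈ ({x, y} : Set V)
          · rcases Set.mem_insert_iff.mp hbS with hc | hc
            · exact hxonly h' h1' (hc ▸ hbB)
            · exact hyonly h' (fun hc' => hnehh (h2.trans hc'.symm))
                ((Set.mem_singleton_iff.mp hc) ▸ hbB)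
          · exact hBCmem h1' (fun hc' => hnehh (h2.trans hc'.symm)) hbB
              (hCcl a b haC hGedge hbS)
        · exact hBCmem h1 h2 haB haC
      have hbC : b ∉ C := by
        intro hbC
        by_cases h2' : h' = i₂
        · by_cases haS : a ∈ ({x, y} : Set V)
          · rcases Set.mem_insert_iff.mp haS with hc | hc
            · exact hxonly h h1 (hc ▸ haB)
            · exact hyonly h (fun hc' => hnehh (hc'.trans h2'.symm))
                ((Set.mem_singleton_iff.mp hc) ▸ haB)
          · exact hBCmem h1 (fun hc' => hnehh (hc'.trans h2'.symm)) haB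
              (hCcl b a hbC hGedge.symm haS)
        · exact hBCmem h1' h2' hbB hbC
      exact ⟨a, ⟨haB, haC⟩, b, ⟨hbB, hbC⟩, hGedge⟩

end ExtAux
namespace ExtAux

variable {V : Type*} {W : Type*}

lemma stepC {G : SimpleGraph V} {H : SimpleGraph W} {x y : V} (hxy : x ≠ y)
    (hsep : IsMinimalSeparator G {x, y})
    (hH2 : ∀ (s t : W) (I : Set W), I.Nonempty → s ∉ I → t ∉ I →
      (∀ h ∈ I, ∀ h', h' ∉ I → h' ≠ s → h' ≠ t → ¬ H.Adj h h') →
      ∀ h', h' ∈ I ∨ h' = s ∨ h' = t)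
    (hH3 : ∀ s t : W, ∃ h : W, h ≠ s ∧ h ≠ t)
    {B : W → Set V} (hM : IsModel (Gplus G x y) H B) :
    ∃ B' : W → Set V, IsModel G H B' := by
  classical
  by_cases hxB : ∃ i, x ∈ B i
  swap
  · exact ⟨B, stepC_easy hM (Or.inl (fun i hc => hxB ⟨i, hc⟩))⟩
  by_cases hyB : ∃ i, y ∈ B i
  swap
  · exact ⟨B, stepC_easy hM (Or.inr (fun i hc => hyB ⟨i, hc⟩))⟩
  obtain ⟨i₁, hxi⟩ := hxB
  obtain ⟨i₂, hyi⟩ := hyB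
  obtain ⟨⟨u, v, hu, hv, hre, hnrIn⟩, hmin⟩ := hsep
  have hnr : ¬ Reach G ({x, y} : Set V)ᶜ u v :=
    fun h => hnrIn (reachIn_iff.mpr ⟨hu, hv, h⟩)
  have hminy : ¬ Separates G {y} := by
    apply hmin
    refine HasSubset.Subset.ssubset_of_ne ?_ ?_
    · intro a ha
      rw [Set.mem_singleton_iff.mp ha]
      exact Or.inr rfl
    · intro hc
      have : x ∈ ({y} : Set V) := hc ▸ (Set.mem_insert x {y})
      exact hxy (Set.mem_singleton_iff.mp this)
  have hminx : ¬ Separates G {x} := by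
    apply hmin
    refine HasSubset.Subset.ssubset_of_ne ?_ ?_
    · intro a ha
      rw [Set.mem_singleton_iff.mp ha]
      exact Or.inl rfl
    · intro hc
      have : y ∈ ({x} : Set V) := hc ▸ (Or.inr rfl : y ∈ ({x, y} : Set V))
      exact hxy (Set.mem_singleton_iff.mp this).symm
  have hpc : ({y, x} : Set V) = ({x, y} : Set V) := Set.pair_comm y x
  have hnrv : ¬ Reach G ({x, y} : Set V)ᶜ v u := fun h => hnr (Reach.symm h)
  -- the four neighbor facts
  have hxCu : ∃ c ∈ Comp G x y u, G.Adj x c := exists_nbr_comp hu hv hre hnr hminy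
  have hyCu : ∃ c ∈ Comp G x y u, G.Adj y c := by
    have h1 : u ∉ ({y, x} : Set V) := by rw [hpc]; exact hu
    have h2 : v ∉ ({y, x} : Set V) := by rw [hpc]; exact hv
    have h3 : ¬ Reach G ({y, x} : Set V)ᶜ u v := by rw [hpc]; exact hnr
    have := exists_nbr_comp h1 h2 hre h3 hminx
    have hcomp : Comp G y x u = Comp G x y u := by unfold Comp; rw [hpc]
    rwa [hcomp] at this
  have hxCv : ∃ c ∈ Comp G x y v, G.Adj x c := exists_nbr_comp hv hu hre.symm hnrv hminy
  have hyCv : ∃ c ∈ Comp G x y v, G.Adj y c := by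
    have h1 : u ∉ ({y, x} : Set V) := by rw [hpc]; exact hu
    have h2 : v ∉ ({y, x} : Set V) := by rw [hpc]; exact hv
    have h3 : ¬ Reach G ({y, x} : Set V)ᶜ v u := by rw [hpc]; exact hnrv
    have := exists_nbr_comp h2 h1 hre.symm h3 hminx
    have hcomp : Comp G y x v = Comp G x y v := by unfold Comp; rw [hpc]
    rwa [hcomp] at this
  -- component facts
  have hCclosed : ∀ w0 : V, ∀ w w', w ∈ Comp G x y w0 → G.Adj w w' →
      w' ∉ ({x, y} : Set V) → w' ∈ Comp G x y w0 :=
    fun w0 w w' hw hadj hw' => comp_closed hw hadj hw'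
  have hCux : x ∉ Comp G x y u := fun h => h.1 (Or.inl rfl)
  have hCuy : y ∉ Comp G x y u := fun h => h.1 (Or.inr rfl)
  have hCvx : x ∉ Comp G x y v := fun h => h.1 (Or.inl rfl)
  have hCvy : y ∉ Comp G x y v := fun h => h.1 (Or.inr rfl)
  have hCdisj : ∀ c, c ∈ Comp G x y u → c ∈ Comp G x y v → False :=
    fun c h1 h2 => hnr (h1.2.trans (Reach.symm h2.2))
  -- dichotomy
  have hdicho : (∀ h, ¬ B h ⊆ Comp G x y u) ∨ (∀ h, ¬ B h ⊆ Comp G x y v) := by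
    by_contra hc
    push_neg at hc
    obtain ⟨⟨hcu, hsubu⟩, ⟨hcv, hsubv⟩⟩ := hc
    have univC : ∀ (Cc : Set V), x ∉ Cc → y ∉ Cc →
        (∀ w w', w ∈ Cc → G.Adj w w' → w' ∉ ({x, y} : Set V) → w' ∈ Cc) →
        ∀ h0, B h0 ⊆ Cc → ∀ h', B h' ⊆ Cc ∨ h' = i₁ ∨ h' = i₂ := by
      intro Cc hCcx hCcy hCccl h0 hsub0 h'
      refine hH2 i₁ i₂ {h | B h ⊆ Cc} ⟨h0, hsub0⟩ (fun hc => hCcx (hc hxi))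
        (fun hc => hCcy (hc hyi)) ?_ h'
      intro hI hIsub h'' hn hn1 hn2 hadj
      obtain ⟨a, haB, b, hbB, hGp⟩ := hM.edge hI h'' hadj
      have haC : a ∈ Cc := hIsub haB
      rcases gplus_adj.mp hGp with hG | ⟨_, ⟨hax, hby⟩ | ⟨hbx, hay⟩⟩
      · by_cases hbS : b ∈ ({x, y} : Set V)
        · rcases Set.mem_insert_iff.mp hbS with hc | hc
          · exact (hM.disj h'' i₁ hn1).ne_of_mem hbB hxi (by rw [hc])
          · exact (hM.disj h'' i₂ hn2).ne_of_mem hbB hyi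
              (by rw [Set.mem_singleton_iff.mp hc])
        · have hbC : b ∈ Cc := hCccl a b haC hG hbS
          rcases partial_mem (hM.conn h'') hCcx hCcy hCccl ⟨b, hbB, hbC⟩ hn
            with hxh | hyh
          · exact (hM.disj h'' i₁ hn1).ne_of_mem hxh hxi rfl
          · exact (hM.disj h'' i₂ hn2).ne_of_mem hyh hyi rfl
      · exact hCcx (hax ▸ haC)
      · exact hCcy (hay ▸ haC)
    obtain ⟨h0, hn1, hn2⟩ := hH3 i₁ i₂
    have hCu0 : B h0 ⊆ Comp G x y u := by
      rcases univC _ hCux hCuy (hCclosed u) hcu hsubu h0 with hc | hc | hc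
      · exact hc
      · exact absurd hc hn1
      · exact absurd hc hn2
    have hCv0 : B h0 ⊆ Comp G x y v := by
      rcases univC _ hCvx hCvy (hCclosed v) hcv hsubv h0 with hc | hc | hc
      · exact hc
      · exact absurd hc hn1
      · exact absurd hc hn2
    obtain ⟨c, hcB⟩ := hM.nonempty h0
    exact hCdisj c (hCu0 hcB) (hCv0 hcB)
  rcases hdicho with hfull | hfull
  · exact surgery hM hCux hCuy (hCclosed u) (comp_connOn hu) hxCu hyCu hfull hxi hyi
  · exact surgery hM hCvx hCvy (hCclosed v) (comp_connOn hv) hxCv hyCv hfull hxi hyi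

end ExtAux
namespace ExtAux

variable {V : Type*} {W : Type*}

lemma stepB {n : ℕ} {G : SimpleGraph V} {D : Set V} {x y : V} (hxy : x ≠ y)
    (hx : x ∈ D) (hy : y ∈ D) {H : SimpleGraph W}
    (hH1 : ∀ i : W, ∃ j₁ j₂ j₃ : W, j₁ ≠ j₂ ∧ j₁ ≠ j₃ ∧ j₂ ≠ j₃ ∧
      H.Adj i j₁ ∧ H.Adj i j₂ ∧ H.Adj i j₃)
    {B : W → Set (↥D ⊕ Fin n)} (hM : IsModel (ExtGraph G D x y n) H B) :
    ∃ B' : W → Set V, IsModel (Gplus G x y) H B' := by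
  classical
  set E := ExtGraph G D x y n with hEdef
  have hEll : ∀ (u v : ↥D), E.Adj (Sum.inl u) (Sum.inl v) →
      G.Adj u v ∨ ((u : V) = x ∧ (v : V) = y) ∨ ((u : V) = y ∧ (v : V) = x) := by
    intro u v hadj
    rw [hEdef, ExtGraph, SimpleGraph.fromRel_adj] at hadj
    obtain ⟨hne, hca⟩ := hadj
    rcases hca with (h | ⟨-, h1, h2⟩) | (h | ⟨-, h1, h2⟩)
    · exact Or.inl h
    · exact Or.inr (Or.inl ⟨h1, h2⟩)
    · exact Or.inl h.symm
    · exact Or.inr (Or.inr ⟨h2, h1⟩)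
  have hElr : ∀ (u : ↥D) (p : Fin n), E.Adj (Sum.inl u) (Sum.inr p) →
      ((u : V) = x ∧ (p : ℕ) = 0) ∨ ((u : V) = y ∧ (p : ℕ) = n - 1) := by
    intro u p hadj
    rw [hEdef, ExtGraph, SimpleGraph.fromRel_adj] at hadj
    obtain ⟨-, hca⟩ := hadj
    rcases hca with h | h
    · exact h
    · exact h.elim
  have hErr : ∀ (p q : Fin n), E.Adj (Sum.inr p) (Sum.inr q) →
      ((q : ℕ) = (p : ℕ) + 1 ∨ (p : ℕ) = (q : ℕ) + 1) := by
    intro p q hadj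
    rw [hEdef, ExtGraph, SimpleGraph.fromRel_adj] at hadj
    obtain ⟨-, hca⟩ := hadj
    tauto
  set P : Set (↥D ⊕ Fin n) := Set.range Sum.inr with hPdef
  set B' : W → Set V := fun h => {v : V | ∃ hv : v ∈ D, Sum.inl ⟨v, hv⟩ ∈ B h} with hB'def
  -- no branch set is contained in the path
  have hnosub : ∀ h, ¬ (B h ⊆ P) := by
    intro h hsub
    set T : Set ℕ := {m | ∃ q : Fin n, (q : ℕ) = m ∧ Sum.inr q ∈ B h} with hTdef
    have hTne : T.Nonempty := by
      obtain ⟨e, he⟩ := hM.nonempty h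
      obtain ⟨q, rfl⟩ := hsub he
      exact ⟨q, q, rfl, he⟩
    have hTlt : ∀ m ∈ T, m < n := by rintro m ⟨q, rfl, -⟩; exact q.isLt
    have hTbdd : BddAbove T := ⟨n, fun m hm => le_of_lt (hTlt m hm)⟩
    set l := sInf T with hldef
    set u := sSup T with hudef
    obtain ⟨ql, hqlv, hqlB⟩ := Nat.sInf_mem hTne
    obtain ⟨qu, hquv, hquB⟩ := Nat.sSup_mem hTne hTbdd
    have hbounds : ∀ m ∈ T, l ≤ m ∧ m ≤ u :=
      fun m hm => ⟨Nat.sInf_le hm, le_csSup hTbdd hm⟩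
    have hln : l < n := by rw [hldef, ← hqlv]; exact ql.isLt
    have hun : u < n := by rw [hudef, ← hquv]; exact qu.isLt
    have hstepN : ∀ a b : ↥D ⊕ Fin n, AdjOn E (B h) a b →
        Relation.ReflTransGen (fun m m' : ℕ => m ∈ T ∧ m' ∈ T ∧ (m' = m + 1 ∨ m = m' + 1))
          (Sum.elim (fun _ => 0) Fin.val a) (Sum.elim (fun _ => 0) Fin.val b) := by
      rintro a b ⟨haB, hbB, hab⟩
      obtain ⟨p, rfl⟩ := hsub haB
      obtain ⟨q, rfl⟩ := hsub hbB
      simp only [Sum.elim_inr]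
      exact Relation.ReflTransGen.single ⟨⟨p, rfl, haB⟩, ⟨q, rfl, hbB⟩, hErr p q hab⟩
    have hchain := rtg_congr (Sum.elim (fun _ : ↥D => (0 : ℕ)) Fin.val)
      hstepN (hM.conn h _ hqlB _ hquB)
    simp only [Sum.elim_inr] at hchain
    rw [hqlv, hquv] at hchain
    have hint : ∀ m, l ≤ m → m ≤ u → m ∈ T := by
      intro m h1 h2
      have key : ∀ (b : ℕ), Relation.ReflTransGen
          (fun m m' : ℕ => m ∈ T ∧ m' ∈ T ∧ (m' = m + 1 ∨ m = m' + 1)) l b →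
          ∀ m', (l ≤ m' ∧ m' ≤ b) ∨ (b ≤ m' ∧ m' ≤ l) → m' ∈ T := by
        intro b hb
        induction hb with
        | refl =>
          intro m' hm'
          have hml : m' = l := by omega
          rw [hml, hldef]
          exact Nat.sInf_mem hTne
        | @tail mid c hmid step ih =>
          intro m' hm'
          by_cases hc2 : (l ≤ m' ∧ m' ≤ mid) ∨ (mid ≤ m' ∧ m' ≤ l)
          · exact ih m' hc2
          · have hmc : m' = c := by rcases step.2.2 with hs | hs <;> omega
            rw [hmc]
            exact step.2.1
      exact key u hchain m (Or.inl ⟨h1, h2⟩)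
    set e₁ : ↥D ⊕ Fin n :=
      if _hc : l = 0 then Sum.inl ⟨x, hx⟩ else Sum.inr ⟨l - 1, by omega⟩ with he₁
    set e₂ : ↥D ⊕ Fin n :=
      if _hc : u = n - 1 then Sum.inl ⟨y, hy⟩ else Sum.inr ⟨u + 1, by omega⟩ with he₂
    have hout : ∀ s t, s ∈ B h → t ∉ B h → E.Adj s t → t = e₁ ∨ t = e₂ := by
      intro s t hsB htB hadj
      obtain ⟨q, rfl⟩ := hsub hsB
      have hqT : (q : ℕ) ∈ T := ⟨q, rfl, hsB⟩
      obtain ⟨hql, hqu⟩ := hbounds _ hqT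
      cases t with
      | inl w =>
        rcases hElr w q hadj.symm with ⟨hwx, hq0⟩ | ⟨hwy, hqn⟩
        · have hl0 : l = 0 := by omega
          left
          rw [he₁, dif_pos hl0]
          exact congrArg Sum.inl (Subtype.ext hwx)
        · have hun' : u = n - 1 := by omega
          right
          rw [he₂, dif_pos hun']
          exact congrArg Sum.inl (Subtype.ext hwy)
      | inr q' =>
        have hq'T : (q' : ℕ) ∉ T := by
          rintro ⟨q'', hq''v, hq''B⟩
          have hqq : q'' = q' := Fin.ext hq''v
          exact htB (hqq ▸ hq''B)
        rcases hErr q q' hadj with hc | hc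
        · have hq2 : (q : ℕ) = u := by
            by_contra hne2
            exact hq'T (hint _ (by omega) (by omega))
          have hunn : u ≠ n - 1 := by
            have := q'.isLt
            omega
          right
          rw [he₂, dif_neg hunn]
          refine congrArg Sum.inr (Fin.ext ?_)
          simp only []
          omega
        · have hq2 : (q : ℕ) = l := by
            by_contra hne2
            exact hq'T (hint _ (by omega) (by omega))
          have hl0 : l ≠ 0 := by omega
          left
          rw [he₁, dif_neg hl0]
          refine congrArg Sum.inr (Fin.ext ?_)
          simp only []
          omega
    obtain ⟨j₁, j₂, j₃, h12, h13, h23, ha1, ha2, ha3⟩ := hH1 h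
    have hget : ∀ j, H.Adj h j → ∃ t, t ∈ B j ∧ (t = e₁ ∨ t = e₂) := by
      intro j hadj
      obtain ⟨a, haB, b, hbB, hab⟩ := hM.edge h j hadj
      have hbnot : b ∉ B h := fun hc => (hM.disj h j hadj.ne).ne_of_mem hc hbB rfl
      exact ⟨b, hbB, hout a b haB hbnot hab⟩
    obtain ⟨t1, ht1B, ht1e⟩ := hget j₁ ha1
    obtain ⟨t2, ht2B, ht2e⟩ := hget j₂ ha2
    obtain ⟨t3, ht3B, ht3e⟩ := hget j₃ ha3
    have hcol : ∀ {j j' : W} {c}, j ≠ j' → c ∈ B j → c ∈ B j' → False :=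
      fun hne hc hc' => (hM.disj _ _ hne).ne_of_mem hc hc' rfl
    have hne12 : t1 ≠ t2 := fun hc => hcol h12 ht1B (by rw [hc]; exact ht2B)
    have hne13 : t1 ≠ t3 := fun hc => hcol h13 ht1B (by rw [hc]; exact ht3B)
    have hne23 : t2 ≠ t3 := fun hc => hcol h23 ht2B (by rw [hc]; exact ht3B)
    rcases ht1e with h1e | h1e <;> rcases ht2e with h2e | h2e <;>
      rcases ht3e with h3e | h3e <;>
      first
      | exact hne12 (h1e.trans h2e.symm)
      | exact hne13 (h1e.trans h3e.symm)
      | exact hne23 (h2e.trans h3e.symm)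
  -- branch sets meeting the path contain x or y
  have hB1 : ∀ h (q : Fin n), Sum.inr q ∈ B h → x ∈ B' h ∨ y ∈ B' h := by
    intro h q hq
    obtain ⟨el, helB, helP⟩ := Set.not_subset.mp (hnosub h)
    obtain ⟨w, rfl⟩ : ∃ w, el = Sum.inl w := by
      cases el with
      | inl w => exact ⟨w, rfl⟩
      | inr q' => exact absurd ⟨q', rfl⟩ helP
    obtain ⟨z, z', hzP, hz'P, hstep⟩ := exists_exit (T := P)
      (hM.conn h _ hq _ helB) ⟨q, rfl⟩ helP
    obtain ⟨p, rfl⟩ := hzP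
    obtain ⟨w', rfl⟩ : ∃ w', z' = Sum.inl w' := by
      cases z' with
      | inl w' => exact ⟨w', rfl⟩
      | inr q' => exact absurd ⟨q', rfl⟩ hz'P
    rcases hElr w' p hstep.2.2.symm with ⟨hw'x, -⟩ | ⟨hw'y, -⟩
    · left
      exact ⟨hx, by rw [show (⟨x, hx⟩ : ↥D) = w' from Subtype.ext hw'x.symm]; exact hstep.2.1⟩
    · right
      exact ⟨hy, by rw [show (⟨y, hy⟩ : ↥D) = w' from Subtype.ext hw'y.symm]; exact hstep.2.1⟩
  have hdisjB' : ∀ h h', h ≠ h' → Disjoint (B' h) (B' h') := by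
    intro h h' hne
    rw [Set.disjoint_left]
    rintro c ⟨hv1, hm1⟩ ⟨hv2, hm2⟩
    exact (hM.disj h h' hne).ne_of_mem hm1 hm2 rfl
  have hne' : ∀ h, (B' h).Nonempty := by
    intro h
    obtain ⟨el, helB, helP⟩ := Set.not_subset.mp (hnosub h)
    obtain ⟨w, rfl⟩ : ∃ w, el = Sum.inl w := by
      cases el with
      | inl w => exact ⟨w, rfl⟩
      | inr q' => exact absurd ⟨q', rfl⟩ helP
    exact ⟨(w : V), w.2, helB⟩
  have hmemB' : ∀ {h} {w : ↥D}, Sum.inl w ∈ B h → (w : V) ∈ B' h :=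
    fun hw => ⟨Subtype.coe_prop _, hw⟩
  have hxmem : ∀ {h} {w : ↥D}, Sum.inl w ∈ B h → (w : V) = x → x ∈ B' h := by
    intro h w hw hwx
    exact ⟨hx, by rw [show (⟨x, hx⟩ : ↥D) = w from Subtype.ext hwx.symm]; exact hw⟩
  have hymem : ∀ {h} {w : ↥D}, Sum.inl w ∈ B h → (w : V) = y → y ∈ B' h := by
    intro h w hw hwy
    exact ⟨hy, by rw [show (⟨y, hy⟩ : ↥D) = w from Subtype.ext hwy.symm]; exact hw⟩
  have hconn' : ∀ h, ConnOn (Gplus G x y) (B' h) := by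
    intro h
    by_cases hxh : x ∈ B' h
    · have hstep : ∀ s t, AdjOn E (B h) s t →
          Reach (Gplus G x y) (B' h) (Sum.elim (fun w : ↥D => (w : V)) (fun _ => x) s)
            (Sum.elim (fun w : ↥D => (w : V)) (fun _ => x) t) := by
        rintro s t ⟨hs, ht, hadj⟩
        cases s with
        | inl ws =>
          cases t with
          | inl wt =>
            simp only [Sum.elim_inl]
            rcases hEll ws wt hadj with hG | ⟨h1, h2⟩ | ⟨h1, h2⟩
            · exact Relation.ReflTransGen.single
                ⟨hmemB' hs, hmemB' ht, gplus_adj.mpr (Or.inl hG)⟩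
            · exact Relation.ReflTransGen.single
                ⟨hmemB' hs, hmemB' ht, by rw [h1, h2]; exact gplus_adj_xy hxy⟩
            · exact Relation.ReflTransGen.single
                ⟨hmemB' hs, hmemB' ht, by rw [h1, h2]; exact (gplus_adj_xy hxy).symm⟩
          | inr qt =>
            simp only [Sum.elim_inl, Sum.elim_inr]
            rcases hElr ws qt hadj with ⟨hwx, -⟩ | ⟨hwy, -⟩
            · rw [hwx]
              exact .refl
            · refine Relation.ReflTransGen.single ⟨hmemB' hs, hxh, ?_⟩
              rw [hwy]
              exact (gplus_adj_xy hxy).symm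
        | inr qs =>
          cases t with
          | inl wt =>
            simp only [Sum.elim_inl, Sum.elim_inr]
            rcases hElr wt qs hadj.symm with ⟨hwx, -⟩ | ⟨hwy, -⟩
            · rw [hwx]
              exact .refl
            · refine Relation.ReflTransGen.single ⟨hxh, hmemB' ht, ?_⟩
              rw [hwy]
              exact gplus_adj_xy hxy
          | inr qt => exact .refl
      intro p hp q hq
      obtain ⟨hvp, hmp⟩ := hp
      obtain ⟨hvq, hmq⟩ := hq
      exact rtg_congr _ hstep (hM.conn h _ hmp _ hmq)
    · have hstep : ∀ s t, AdjOn E (B h) s t →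
          Reach (Gplus G x y) (B' h) (Sum.elim (fun w : ↥D => (w : V)) (fun _ => y) s)
            (Sum.elim (fun w : ↥D => (w : V)) (fun _ => y) t) := by
        rintro s t ⟨hs, ht, hadj⟩
        cases s with
        | inl ws =>
          cases t with
          | inl wt =>
            simp only [Sum.elim_inl]
            rcases hEll ws wt hadj with hG | ⟨h1, h2⟩ | ⟨h1, h2⟩
            · exact Relation.ReflTransGen.single
                ⟨hmemB' hs, hmemB' ht, gplus_adj.mpr (Or.inl hG)⟩
            · exact absurd (hxmem hs h1) hxh
            · exact absurd (hxmem ht h2) hxh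
          | inr qt =>
            simp only [Sum.elim_inl, Sum.elim_inr]
            rcases hElr ws qt hadj with ⟨hwx, -⟩ | ⟨hwy, -⟩
            · exact absurd (hxmem hs hwx) hxh
            · rw [hwy]
              exact .refl
        | inr qs =>
          cases t with
          | inl wt =>
            simp only [Sum.elim_inl, Sum.elim_inr]
            rcases hElr wt qs hadj.symm with ⟨hwx, -⟩ | ⟨hwy, -⟩
            · exact absurd (hxmem ht hwx) hxh
            · rw [hwy]
              exact .refl
          | inr qt => exact .refl
      intro p hp q hq
      obtain ⟨hvp, hmp⟩ := hp
      obtain ⟨hvq, hmq⟩ := hq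
      exact rtg_congr _ hstep (hM.conn h _ hmp _ hmq)
  have hedge' : ∀ i j, H.Adj i j → ∃ a ∈ B' i, ∃ b ∈ B' j, (Gplus G x y).Adj a b := by
    intro i j hij
    obtain ⟨a, haB, b, hbB, hab⟩ := hM.edge i j hij
    have hne := hij.ne
    cases a with
    | inl wa =>
      cases b with
      | inl wb =>
        rcases hEll wa wb hab with hG | ⟨h1, h2⟩ | ⟨h1, h2⟩
        · exact ⟨wa, hmemB' haB, wb, hmemB' hbB, gplus_adj.mpr (Or.inl hG)⟩
        · exact ⟨wa, hmemB' haB, wb, hmemB' hbB, by rw [h1, h2]; exact gplus_adj_xy hxy⟩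
        · exact ⟨wa, hmemB' haB, wb, hmemB' hbB,
            by rw [h1, h2]; exact (gplus_adj_xy hxy).symm⟩
      | inr qb =>
        rcases hB1 j qb hbB with hxj | hyj
        · rcases hElr wa qb hab with ⟨h1, -⟩ | ⟨h1, -⟩
          · exact absurd rfl ((hdisjB' i j hne).ne_of_mem (hxmem haB h1) hxj)
          · exact ⟨y, hymem haB h1, x, hxj, (gplus_adj_xy hxy).symm⟩
        · rcases hElr wa qb hab with ⟨h1, -⟩ | ⟨h1, -⟩
          · exact ⟨x, hxmem haB h1, y, hyj, gplus_adj_xy hxy⟩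
          · exact absurd rfl ((hdisjB' i j hne).ne_of_mem (hymem haB h1) hyj)
    | inr qa =>
      cases b with
      | inl wb =>
        rcases hB1 i qa haB with hxi2 | hyi2
        · rcases hElr wb qa hab.symm with ⟨h1, -⟩ | ⟨h1, -⟩
          · exact absurd rfl ((hdisjB' i j hne).ne_of_mem hxi2 (hxmem hbB h1))
          · exact ⟨x, hxi2, y, hymem hbB h1, gplus_adj_xy hxy⟩
        · rcases hElr wb qa hab.symm with ⟨h1, -⟩ | ⟨h1, -⟩
          · exact ⟨y, hyi2, x, hxmem hbB h1, (gplus_adj_xy hxy).symm⟩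
          · exact absurd rfl ((hdisjB' i j hne).ne_of_mem hyi2 (hymem hbB h1))
      | inr qb =>
        rcases hB1 i qa haB with hxi2 | hyi2 <;> rcases hB1 j qb hbB with hxj2 | hyj2
        · exact absurd rfl ((hdisjB' i j hne).ne_of_mem hxi2 hxj2)
        · exact ⟨x, hxi2, y, hyj2, gplus_adj_xy hxy⟩
        · exact ⟨y, hyi2, x, hxj2, (gplus_adj_xy hxy).symm⟩
        · exact absurd rfl ((hdisjB' i j hne).ne_of_mem hyi2 hyj2)
  exact ⟨B', ⟨hne', hconn', hdisjB', hedge'⟩⟩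

end ExtAux
namespace ExtAux

lemma hH1_K5 : ∀ i : Fin 5, ∃ j₁ j₂ j₃ : Fin 5, j₁ ≠ j₂ ∧ j₁ ≠ j₃ ∧ j₂ ≠ j₃ ∧
    (completeGraph (Fin 5)).Adj i j₁ ∧ (completeGraph (Fin 5)).Adj i j₂ ∧
    (completeGraph (Fin 5)).Adj i j₃ := by
  simp only [completeGraph_eq_top, SimpleGraph.top_adj]
  decide

lemma hH2_K5 : ∀ (s t : Fin 5) (I : Set (Fin 5)), I.Nonempty → s ∉ I → t ∉ I →
    (∀ h ∈ I, ∀ h', h' ∉ I → h' ≠ s → h' ≠ t → ¬ (completeGraph (Fin 5)).Adj h h') →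
    ∀ h', h' ∈ I ∨ h' = s ∨ h' = t := by
  rintro s t I ⟨h0, h0I⟩ hsI htI hedge h'
  by_contra hc
  push_neg at hc
  obtain ⟨hI, hs, ht⟩ := hc
  have hne := hedge h0 h0I h' hI hs ht
  simp only [completeGraph_eq_top, SimpleGraph.top_adj, not_not] at hne
  exact hI (hne ▸ h0I)

lemma hH3_K5 : ∀ s t : Fin 5, ∃ h : Fin 5, h ≠ s ∧ h ≠ t := by decide

lemma hH1_K33 : ∀ i : Fin 3 ⊕ Fin 3, ∃ j₁ j₂ j₃ : Fin 3 ⊕ Fin 3,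
    j₁ ≠ j₂ ∧ j₁ ≠ j₃ ∧ j₂ ≠ j₃ ∧
    (completeBipartiteGraph (Fin 3) (Fin 3)).Adj i j₁ ∧
    (completeBipartiteGraph (Fin 3) (Fin 3)).Adj i j₂ ∧
    (completeBipartiteGraph (Fin 3) (Fin 3)).Adj i j₃ := by
  simp only [completeBipartiteGraph_adj]
  decide

lemma hH3_K33 : ∀ s t : Fin 3 ⊕ Fin 3, ∃ h : Fin 3 ⊕ Fin 3, h ≠ s ∧ h ≠ t := by decide

lemma hH2_K33 : ∀ (s t : Fin 3 ⊕ Fin 3) (I : Set (Fin 3 ⊕ Fin 3)), I.Nonempty →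
    s ∉ I → t ∉ I →
    (∀ h ∈ I, ∀ h', h' ∉ I → h' ≠ s → h' ≠ t →
      ¬ (completeBipartiteGraph (Fin 3) (Fin 3)).Adj h h') →
    ∀ w, w ∈ I ∨ w = s ∨ w = t := by
  rintro s t I ⟨h0, h0I⟩ hsI htI hedge w
  by_contra hc
  push_neg at hc
  obtain ⟨hwI, hws, hwt⟩ := hc
  have hsame := hedge h0 h0I w hwI hws hwt
  cases h0 with
  | inl a =>
    cases w with
    | inr b => exact hsame (by simp)
    | inl b =>
      have hall : ∀ k : Fin 3, (Sum.inr k : Fin 3 ⊕ Fin 3) = s ∨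
          (Sum.inr k : Fin 3 ⊕ Fin 3) = t := by
        intro k
        by_cases hkI : (Sum.inr k : Fin 3 ⊕ Fin 3) ∈ I
        · exact absurd (by simp : (completeBipartiteGraph (Fin 3) (Fin 3)).Adj
            (Sum.inr k) (Sum.inl b)) (hedge _ hkI _ hwI hws hwt)
        · by_cases hks : (Sum.inr k : Fin 3 ⊕ Fin 3) = s
          · exact Or.inl hks
          · by_cases hkt : (Sum.inr k : Fin 3 ⊕ Fin 3) = t
            · exact Or.inr hkt
            · exact absurd (by simp : (completeBipartiteGraph (Fin 3) (Fin 3)).Adj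
                (Sum.inl a) (Sum.inr k)) (hedge _ h0I _ hkI hks hkt)
      rcases hall 0 with h0e | h0e <;> rcases hall 1 with h1e | h1e <;>
        rcases hall 2 with h2e | h2e <;>
        first
        | exact absurd (h0e.trans h1e.symm) (by decide)
        | exact absurd (h0e.trans h2e.symm) (by decide)
        | exact absurd (h1e.trans h2e.symm) (by decide)
  | inr a =>
    cases w with
    | inl b => exact hsame (by simp)
    | inr b =>
      have hall : ∀ k : Fin 3, (Sum.inl k : Fin 3 ⊕ Fin 3) = s ∨
          (Sum.inl k : Fin 3 ⊕ Fin 3) = t := by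
        intro k
        by_cases hkI : (Sum.inl k : Fin 3 ⊕ Fin 3) ∈ I
        · exact absurd (by simp : (completeBipartiteGraph (Fin 3) (Fin 3)).Adj
            (Sum.inl k) (Sum.inr b)) (hedge _ hkI _ hwI hws hwt)
        · by_cases hks : (Sum.inl k : Fin 3 ⊕ Fin 3) = s
          · exact Or.inl hks
          · by_cases hkt : (Sum.inl k : Fin 3 ⊕ Fin 3) = t
            · exact Or.inr hkt
            · exact absurd (by simp : (completeBipartiteGraph (Fin 3) (Fin 3)).Adj
                (Sum.inr a) (Sum.inl k)) (hedge _ h0I _ hkI hks hkt)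
      rcases hall 0 with h0e | h0e <;> rcases hall 1 with h1e | h1e <;>
        rcases hall 2 with h2e | h2e <;>
        first
        | exact absurd (h0e.trans h1e.symm) (by decide)
        | exact absurd (h0e.trans h2e.symm) (by decide)
        | exact absurd (h1e.trans h2e.symm) (by decide)

end ExtAux

theorem extension_of_minimalSeparator_planar [Fintype V] (G : SimpleGraph V)
    (x y : V) (hxy : x ≠ y) (hG : IsPlanar G) (hsep : IsMinimalSeparator G {x, y})
    (D : Set V) (hx : x ∈ D) (hy : y ∈ D) (n : ℕ) :
    IsPlanar (ExtGraph G D x y n) := by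
  classical
  constructor
  · intro hcon
    obtain ⟨B, hB⟩ := ExtAux.hasMinor_model hcon
    obtain ⟨B1, hB1⟩ := ExtAux.stepB hxy hx hy ExtAux.hH1_K5 hB
    obtain ⟨B2, hB2⟩ := ExtAux.stepC hxy hsep ExtAux.hH2_K5 ExtAux.hH3_K5 hB1
    exact hG.1 (ExtAux.model_hasMinor hB2)
  · intro hcon
    obtain ⟨B, hB⟩ := ExtAux.hasMinor_model hcon
    obtain ⟨B1, hB1⟩ := ExtAux.stepB hxy hx hy ExtAux.hH1_K33 hB
    obtain ⟨B2, hB2⟩ := ExtAux.stepC hxy hsep ExtAux.hH2_K33 ExtAux.hH3_K33 hB1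
    exact hG.2 (ExtAux.model_hasMinor hB2)
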